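/- With notation as in the context, assume the set {f(a) : f ∈ 𝓕} ∪ {f(b) : f ∈ 𝓕} satisfies the descending chain condition, and let K ∈ ℝ. Let W be the set of all linear functions w such that there exist an integer s ∈ ℤ_{>0}, positive integers r₁, …, r_s, and functions w₁, …, w_s ∈ 𝒟(𝓕, [a,b]), none of which is identically zero, satisfying r₁w₁(t) + ⋯ + r_s w_s(t) = K for all t ∈ [a,b], and such that w = wⱼ for some j ∈ {1, …, s}. Then W is a finite set. -/

import Mathlib

/-- A set `S ⊆ ℝ` satisfies the descending chain condition (DCC) if there is no
infinite strictly decreasing sequence of elements of `S`. -/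
def DCC (S : Set ℝ) : Prop :=
  ¬ ∃ f : ℕ → ℝ, (∀ i, f i ∈ S) ∧ StrictAnti f

/-- A real function is linear if it has the form `t ↦ p * t + q`. -/
def IsLinearFun (f : ℝ → ℝ) : Prop := ∃ p q : ℝ, ∀ t, f t = p * t + q

/-- `(𝓕₊, [a,c])`: `{0}` together with all finite positive-integer combinations of
elements of `𝓕` that are bounded above by `1` on `[a,c]`. -/
def FPlus (F : Set (ℝ → ℝ)) (a c : ℝ) : Set (ℝ → ℝ) :=
  {0} ∪ { v | (∃ k : ℕ, 0 < k ∧ ∃ n : Fin k → ℕ, ∃ f : Fin k → ℝ → ℝ,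
      (∀ i, 0 < n i) ∧ (∀ i, f i ∈ F) ∧ v = fun t => ∑ i, (n i : ℝ) * f i t) ∧
      ∀ t ∈ Set.Icc a c, v t ≤ 1 }

/-- `D(𝓕, [a,c])`: all functions `(m - 1 + v)/m` with `m ∈ ℤ_{>0}`, `v ∈ (𝓕₊,[a,c])`,
that are bounded above by `1` on `[a,c]`. -/
def DOp (F : Set (ℝ → ℝ)) (a c : ℝ) : Set (ℝ → ℝ) :=
  { w | ∃ m : ℕ, 0 < m ∧ ∃ v ∈ FPlus F a c,
      w = (fun t => ((m : ℝ) - 1 + v t) / m) ∧ ∀ t ∈ Set.Icc a c, w t ≤ 1 }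

/-- `𝒟(𝓕, [a,b]) = ⋃_{a < c ≤ b} D(𝓕, [a,c])`. -/
def calD (F : Set (ℝ → ℝ)) (a b : ℝ) : Set (ℝ → ℝ) :=
  ⋃ c ∈ Set.Ioc a b, DOp F a c

/-- The set of linear functions appearing as a summand in some numerically
trivial relation `r₁w₁ + ⋯ + r_s w_s = K` on `[a,b]` with all `wⱼ ∈ 𝒟(𝓕,[a,b])`
nonzero and all `rⱼ` positive integers. -/
def Wset (F : Set (ℝ → ℝ)) (a b K : ℝ) : Set (ℝ → ℝ) :=
  { w | ∃ s : ℕ, 0 < s ∧ ∃ r : Fin s → ℕ, ∃ ws : Fin s → ℝ → ℝ,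
      (∀ j, 0 < r j) ∧ (∀ j, ws j ∈ calD F a b) ∧ (∀ j, ws j ≠ 0) ∧
      (∀ t ∈ Set.Icc a b, ∑ j, (r j : ℝ) * ws j t = K) ∧ ∃ j, w = ws j }

namespace TrivAux

open Set Pointwise

/-- All finite sums (with multiplicity) of elements of `T`. -/
def combos (T : Set ℝ) : Set ℝ := {x | ∃ M : Multiset ℝ, (∀ y ∈ M, y ∈ T) ∧ x = M.sum}

lemma zero_mem_combos (T : Set ℝ) : (0:ℝ) ∈ combos T := ⟨0, by simp, by simp⟩

lemma combos_nonneg {T : Set ℝ} (hT : ∀ x ∈ T, (0:ℝ) ≤ x) : ∀ x ∈ combos T, 0 ≤ x := by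
  rintro x ⟨M, hM, rfl⟩
  exact Multiset.sum_nonneg fun y hy => hT y (hM y hy)

/-- `N`-fold Minkowski sum of `T`. -/
def nsum (T : Set ℝ) : ℕ → Set ℝ
  | 0 => {0}
  | (N+1) => T + nsum T N

lemma nsum_isWF {T : Set ℝ} (hT : T.IsWF) : ∀ N, (nsum T N).IsWF := by
  intro N
  induction N with
  | zero => exact (Set.finite_singleton (0:ℝ)).isWF
  | succ N ih =>
    have : (T + nsum T N).IsWF := hT.add ih
    simpa [nsum] using this

lemma sum_mem_nsum {T : Set ℝ} (h0 : (0:ℝ) ∈ T) :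
    ∀ (N : ℕ) (M : Multiset ℝ), Multiset.card M ≤ N → (∀ y ∈ M, y ∈ T) →
      M.sum ∈ nsum T N := by
  intro N
  induction N with
  | zero =>
    intro M hc _
    have hM : M = 0 := Multiset.card_eq_zero.mp (Nat.le_zero.mp hc)
    simp [hM, nsum]
  | succ N ih =>
    intro M hc hmem
    by_cases hM : M = 0
    · have h0' : (0:ℝ) ∈ nsum T N := by
        have := ih 0 (by simp) (by simp)
        simpa using this
      have hsum : (0:ℝ) ∈ nsum T (N+1) := by
        have := Set.add_mem_add h0 h0'
        simpa [nsum] using this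
      simpa [hM] using hsum
    · obtain ⟨y, hy⟩ := Multiset.exists_mem_of_ne_zero hM
      obtain ⟨M', rfl⟩ := Multiset.exists_cons_of_mem hy
      have hc' : Multiset.card M' ≤ N := by
        rw [Multiset.card_cons] at hc; omega
      have hs : M'.sum ∈ nsum T N :=
        ih M' hc' fun z hz => hmem z (Multiset.mem_cons_of_mem hz)
      have := Set.add_mem_add (hmem y (Multiset.mem_cons_self y M')) hs
      simpa [nsum, Multiset.sum_cons] using this

lemma combos_isWF {T : Set ℝ} (hT0 : ∀ x ∈ T, (0:ℝ) ≤ x) (hT : T.IsWF) :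
    (combos T).IsWF := by
  rw [Set.isWF_iff_no_descending_seq]
  intro f hf hmem
  have hmem' : ∀ n : ℕ, f n ∈ combos T := fun n => hmem n
  by_cases hP : ∃ x ∈ T, x ≠ 0
  · have hPne : (T ∩ {x : ℝ | x ≠ 0}).Nonempty := by
      obtain ⟨x, hx, hx0⟩ := hP; exact ⟨x, hx, hx0⟩
    have hPWF : (T ∩ {x : ℝ | x ≠ 0}).IsWF := hT.mono Set.inter_subset_left
    set ε := hPWF.min hPne with hεdef
    have hεmem : ε ∈ T ∩ {x : ℝ | x ≠ 0} := hPWF.min_mem hPne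
    have hεpos : 0 < ε := lt_of_le_of_ne (hT0 _ hεmem.1) (Ne.symm hεmem.2)
    have hεmin : ∀ x ∈ T, x ≠ 0 → ε ≤ x := fun x hx h0 => hPWF.min_le hPne ⟨hx, h0⟩
    have hf0 : 0 ≤ f 0 := combos_nonneg hT0 _ (hmem' 0)
    set N := Nat.ceil (f 0 / ε) with hN
    have key : ∀ n, f n ∈ nsum (insert (0:ℝ) T) N := by
      intro n
      obtain ⟨M, hM, hsum⟩ := hmem' n
      classical
      set M' := M.filter (fun y => ¬ y = 0) with hM'
      have hsum' : M'.sum = M.sum := by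
        have h1 : M.filter (fun y => y = 0) + M' = M := by
          simpa [hM'] using Multiset.filter_add_not (fun y => y = 0) M
        have h2 : (M.filter (fun y => y = 0)).sum = 0 :=
          Multiset.sum_eq_zero (fun y hy => (Multiset.mem_filter.mp hy).2)
        calc M'.sum = (M.filter (fun y => y = 0)).sum + M'.sum := by rw [h2, zero_add]
          _ = M.sum := by rw [← Multiset.sum_add, h1]
      have hM'T : ∀ y ∈ M', y ∈ T := fun y hy => hM y (Multiset.mem_of_mem_filter hy)
      have hM'ε : ∀ y ∈ M', ε ≤ y := fun y hy =>
        hεmin y (hM'T y hy) (Multiset.mem_filter.mp hy).2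
      have hcard : (Multiset.card M' : ℝ) * ε ≤ f n := by
        have hle := Multiset.card_nsmul_le_sum hM'ε
        rw [nsmul_eq_mul] at hle
        rw [hsum, ← hsum']
        exact hle
      have hfn : f n ≤ f 0 := hf.antitone (Nat.zero_le n)
      have hcN : Multiset.card M' ≤ N := by
        have h1 : (Multiset.card M' : ℝ) ≤ f 0 / ε := by
          rw [le_div_iff₀ hεpos]; linarith
        have h2 : (f 0 / ε) ≤ (N : ℝ) := Nat.le_ceil _
        exact_mod_cast h1.trans h2
      have hres := sum_mem_nsum (T := insert (0:ℝ) T) (Set.mem_insert 0 T) N M' hcN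
        (fun y hy => Set.mem_insert_of_mem _ (hM'T y hy))
      rw [hsum, ← hsum']
      exact hres
    have hWF : (nsum (insert (0:ℝ) T) N).IsWF := nsum_isWF (by
      rw [Set.insert_eq]; exact (Set.finite_singleton (0:ℝ)).isWF.union hT) N
    rw [Set.isWF_iff_no_descending_seq] at hWF
    exact hWF f hf key
  · push_neg at hP
    have h01 : f 1 < f 0 := hf (by norm_num)
    have hz : ∀ n, f n = 0 := by
      intro n
      obtain ⟨M, hM, hsum⟩ := hmem' n
      rw [hsum]
      exact Multiset.sum_eq_zero fun y hy => hP y (hM y hy)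
    rw [hz 0, hz 1] at h01; exact lt_irrefl _ h01

lemma exists_const_subseq {g : ℕ → ℕ} {M : ℕ} (hg : ∀ n, g n ≤ M) :
    ∃ m, ∃ φ : ℕ → ℕ, StrictMono φ ∧ ∀ k, g (φ k) = m := by
  have hex : ∃ m, {n : ℕ | g n = m}.Infinite := by
    by_contra hcon
    push_neg at hcon
    have hcover : (Set.univ : Set ℕ) ⊆ ⋃ v ∈ Set.Iic M, {n : ℕ | g n = v} := by
      intro n _
      simp only [Set.mem_iUnion, Set.mem_setOf_eq]
      exact ⟨g n, hg n, rfl⟩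
    exact Set.infinite_univ (Set.Finite.subset
      (Set.Finite.biUnion (Set.finite_Iic M) fun v _ => hcon v) hcover)
  obtain ⟨m, hm⟩ := hex
  exact ⟨m, Nat.nth (fun n => g n = m), Nat.nth_strictMono hm,
    fun k => Nat.nth_mem_of_infinite hm k⟩

lemma capped_isWF {T : Set ℝ} (hT0 : ∀ x ∈ T, (0:ℝ) ≤ x) (hT : T.IsWF) (MB : ℕ) :
    {y : ℝ | ∃ m : ℕ, 0 < m ∧ ∃ x ∈ T, y = ((m:ℝ) - 1 + x) / m ∧
      (y ≤ 1 ∨ m ≤ MB)}.IsWF := by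
  rw [Set.isWF_iff_no_descending_seq]
  intro f hf hmem
  have hmem' : ∀ n : ℕ, ∃ m : ℕ, 0 < m ∧ ∃ x, x ∈ T ∧ (f n = ((m:ℝ) - 1 + x)/m ∧
      (f n ≤ 1 ∨ m ≤ MB)) := by
    intro n
    obtain ⟨m, hm, x, hx, h1, h2⟩ := hmem n
    exact ⟨m, hm, x, hx, h1, h2⟩
  choose m hm x hxT hrep hcap using hmem'
  have hmpos : ∀ n, (0:ℝ) < m n := fun n => by exact_mod_cast hm n
  have hlb : ∀ n, 1 - 1/(m n : ℝ) ≤ f n := by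
    intro n
    have hx0 := hT0 _ (hxT n)
    have hp := hmpos n
    rw [hrep n, le_div_iff₀ hp]
    have h1 : (1 - 1/(m n : ℝ)) * (m n : ℝ) = (m n : ℝ) - 1 := by field_simp
    rw [h1]
    linarith
  have hbound : ∃ (n₁ M' : ℕ), ∀ k, m (k + n₁) ≤ M' := by
    by_cases h1 : ∃ n, f n ≤ 1
    · obtain ⟨n₀, hn₀⟩ := h1
      have hδ : 0 < 1 - f (n₀ + 1) := by
        have hlt : f (n₀ + 1) < f n₀ := hf (Nat.lt_succ_self n₀)
        linarith
      refine ⟨n₀ + 1, max MB (Nat.ceil (1 / (1 - f (n₀+1)))), fun k => ?_⟩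
      rcases hcap (k + (n₀+1)) with h | h
      · have hfk : f (k + (n₀+1)) ≤ f (n₀+1) := hf.antitone (Nat.le_add_left _ _)
        have h2 : 1 - 1/(m (k + (n₀+1)) : ℝ) ≤ f (n₀+1) := (hlb _).trans hfk
        have hp := hmpos (k + (n₀+1))
        have h3 : (m (k + (n₀+1)) : ℝ) ≤ 1 / (1 - f (n₀+1)) := by
          rw [le_div_iff₀ hδ]
          have h4 : (m (k + (n₀+1)) : ℝ) * (1/(m (k + (n₀+1)) : ℝ)) = 1 := by
            field_simp
          nlinarith
        have h5 : m (k + (n₀+1)) ≤ Nat.ceil (1 / (1 - f (n₀+1))) := by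
          have h6 := h3.trans (Nat.le_ceil _)
          exact_mod_cast h6
        exact h5.trans (le_max_right _ _)
      · exact h.trans (le_max_left _ _)
    · push_neg at h1
      refine ⟨0, MB, fun k => ?_⟩
      rcases hcap (k + 0) with h | h
      · exact absurd h (not_le.mpr (h1 _))
      · exact h
  obtain ⟨n₁, M', hM'⟩ := hbound
  obtain ⟨mv, φ, hφ, hφm⟩ := exists_const_subseq (g := fun k => m (k + n₁)) hM'
  have hmv : 0 < mv := hφm 0 ▸ hm (φ 0 + n₁)
  have hmvpos : (0:ℝ) < mv := by exact_mod_cast hmv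
  have e : ∀ i, x (φ i + n₁) = (mv:ℝ) * f (φ i + n₁) - (mv:ℝ) + 1 := by
    intro i
    have h := hrep (φ i + n₁)
    have hmm : (m (φ i + n₁) : ℝ) = (mv:ℝ) := by exact_mod_cast hφm i
    rw [hmm] at h
    field_simp at h
    linarith
  have hxanti : StrictAnti (fun k => x (φ k + n₁)) := by
    intro k l hkl
    have hfl : f (φ l + n₁) < f (φ k + n₁) := by
      apply hf
      have := hφ hkl
      omega
    simp only []
    rw [e k, e l]
    nlinarith
  rw [Set.isWF_iff_no_descending_seq] at hT
  exact hT _ hxanti fun k => hxT (φ k + n₁)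

lemma calD_rep {a b : ℝ} (hab : a < b) {F : Set (ℝ → ℝ)}
    (hlin : ∀ f ∈ F, IsLinearFun f)
    (hnonneg : ∀ f ∈ F, ∀ t ∈ Set.Icc a b, 0 ≤ f t)
    {w : ℝ → ℝ} (hw : w ∈ calD F a b) :
    ∃ (m : ℕ) (v : ℝ → ℝ), 0 < m ∧ (∀ t, w t = ((m:ℝ) - 1 + v t) / m) ∧
      IsLinearFun v ∧ (∀ t ∈ Set.Icc a b, 0 ≤ v t) ∧
      v a ∈ combos ((fun f : ℝ → ℝ => f a) '' F) ∧
      v b ∈ combos ((fun f : ℝ → ℝ => f b) '' F) ∧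
      v a ≤ 1 ∧ (v a = 1 → v b ≤ 1) := by
  simp only [calD, Set.mem_iUnion] at hw
  obtain ⟨c, hc, hw⟩ := hw
  obtain ⟨m, hm, v, hv, hweq, hwcap⟩ := hw
  have hac : a ≤ c := hc.1.le
  have hwt : ∀ t, w t = ((m:ℝ) - 1 + v t) / m := fun t => by rw [hweq]
  rcases hv with hv0 | ⟨⟨k, hk, n, g, hn, hgF, hveq⟩, hvcap⟩
  · have hv0' : v = 0 := hv0
    refine ⟨m, v, hm, hwt, ⟨0, 0, fun t => by simp [hv0']⟩,
      fun t _ => by simp [hv0'], ?_, ?_, by simp [hv0'], fun _ => by simp [hv0']⟩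
    · have h0 := zero_mem_combos ((fun f : ℝ → ℝ => f a) '' F)
      simpa [hv0'] using h0
    · have h0 := zero_mem_combos ((fun f : ℝ → ℝ => f b) '' F)
      simpa [hv0'] using h0
  · choose p q hpq using fun i => hlin (g i) (hgF i)
    have hvlin : IsLinearFun v := by
      refine ⟨∑ i, (n i : ℝ) * p i, ∑ i, (n i : ℝ) * q i, fun t => ?_⟩
      rw [hveq]
      simp only []
      rw [Finset.sum_mul, ← Finset.sum_add_distrib]
      exact Finset.sum_congr rfl fun i _ => by rw [hpq i]; ring
    have hvnn : ∀ t ∈ Set.Icc a b, 0 ≤ v t := by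
      intro t ht
      rw [hveq]
      exact Finset.sum_nonneg fun i _ =>
        mul_nonneg (Nat.cast_nonneg _) (hnonneg (g i) (hgF i) t ht)
    have hva1 : v a ≤ 1 := hvcap a ⟨le_rfl, hac⟩
    have hcomb : ∀ t₀ : ℝ, v t₀ ∈ combos ((fun f : ℝ → ℝ => f t₀) '' F) := by
      intro t₀
      refine ⟨∑ i, Multiset.replicate (n i) (g i t₀), ?_, ?_⟩
      · intro y hy
        rw [Multiset.mem_sum] at hy
        obtain ⟨i, _, hy⟩ := hy
        rw [Multiset.eq_of_mem_replicate hy]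
        exact ⟨g i, hgF i, rfl⟩
      · rw [Multiset.sum_sum, hveq]
        simp [Multiset.sum_replicate, nsmul_eq_mul]
    have himp : v a = 1 → v b ≤ 1 := by
      intro h1
      obtain ⟨pp, qq, hpq'⟩ := hvlin
      have hvc : v c ≤ 1 := hvcap c ⟨hac, le_rfl⟩
      have h2 : v c ≤ v a := by rw [h1]; exact hvc
      rw [hpq' a, hpq' c] at h2
      have hp : pp ≤ 0 := by
        by_contra hpp
        push_neg at hpp
        have := mul_lt_mul_of_pos_left hc.1 hpp
        linarith
      have h3 : pp * (b - a) ≤ 0 :=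
        mul_nonpos_iff.mpr (Or.inr ⟨hp, by linarith⟩)
      rw [hpq' a] at h1
      rw [hpq' b]
      nlinarith
    exact ⟨m, v, hm, hwt, hvlin, hvnn, hcomb a, hcomb b, hva1, himp⟩

lemma core_finite {a b K : ℝ} {F : Set (ℝ → ℝ)}
    {t₀ : ℝ} (ht₀ : t₀ ∈ Set.Icc a b)
    {V : Set ℝ} (hV0 : ∀ x ∈ V, (0:ℝ) ≤ x) (hV : V.IsWF)
    (hmem : ∀ w ∈ Wset F a b K, w t₀ ∈ V) :
    ((fun w : ℝ → ℝ => w t₀) '' Wset F a b K).Finite := by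
  by_contra hinf
  have hinf' : ((fun w : ℝ → ℝ => w t₀) '' Wset F a b K).Infinite := hinf
  set e := hinf'.natEmbedding with he
  set f : ℕ → ℝ := fun n => (e n : ℝ) with hfdef
  have hfmem : ∀ n, f n ∈ (fun w : ℝ → ℝ => w t₀) '' Wset F a b K := fun n => (e n).2
  have hfV : ∀ n, f n ∈ V := by
    intro n
    obtain ⟨w, hw, hwe⟩ := hfmem n
    rw [← hwe]
    exact hmem w hw
  have hfInj : Function.Injective f := fun n n' h => e.injective (Subtype.ext h)
  obtain ⟨g, hg⟩ := hV.isPWO.exists_monotone_subseq hfV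
  set β : ℕ → ℝ := fun n => f (g n) with hβdef
  have hβmono : Monotone β := hg
  have hβstrict : StrictMono β :=
    hβmono.strictMono_of_injective (hfInj.comp g.injective)
  have hβmem : ∀ n, ∃ w, w ∈ Wset F a b K ∧ w t₀ = β n := fun n => hfmem (g n)
  choose w hwW hwt using hβmem
  have hwW' : ∀ n, ∃ s : ℕ, 0 < s ∧ ∃ r : Fin s → ℕ, ∃ ws : Fin s → ℝ → ℝ,
      (∀ j, 0 < r j) ∧ (∀ j, ws j ∈ calD F a b) ∧ (∀ j, ws j ≠ 0) ∧
      (∀ t ∈ Set.Icc a b, ∑ j, (r j : ℝ) * ws j t = K) ∧ ∃ j, w n = ws j :=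
    fun n => hwW n
  choose s hs r ws hr hD hne hrel j hj using hwW'
  have hwsW : ∀ n (j' : Fin (s n)), ws n j' ∈ Wset F a b K := fun n j' =>
    ⟨s n, hs n, r n, ws n, hr n, hD n, hne n, hrel n, j', rfl⟩
  have hts : ∀ n j', 0 ≤ ws n j' t₀ := fun n j' => hV0 _ (hmem _ (hwsW n j'))
  have hKrel : ∀ n, ∑ j', (r n j' : ℝ) * ws n j' t₀ = K := fun n => hrel n t₀ ht₀
  have hβval : ∀ n, ws n (j n) t₀ = β n := by
    intro n
    rw [← hj n]
    exact hwt n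
  have hsingle : ∀ n, (r n (j n) : ℝ) * β n ≤ K := by
    intro n
    have h := Finset.single_le_sum (f := fun j' => (r n j' : ℝ) * ws n j' t₀)
      (fun j' _ => mul_nonneg (Nat.cast_nonneg _) (hts n j')) (Finset.mem_univ (j n))
    have h2 : (r n (j n) : ℝ) * ws n (j n) t₀ ≤ ∑ j', (r n j' : ℝ) * ws n j' t₀ := h
    rw [hKrel n, hβval n] at h2
    exact h2
  have hβ0 : 0 ≤ β 0 := by rw [← hβval 0]; exact hts 0 (j 0)
  have hβ1 : 0 < β 1 := lt_of_le_of_lt hβ0 (hβstrict Nat.zero_lt_one)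
  have hρbound : ∀ n, r (n+1) (j (n+1)) ≤ Nat.floor (K / β 1) := by
    intro n
    have h1 : β 1 ≤ β (n+1) := hβmono (Nat.le_add_left 1 n)
    have h2 : (r (n+1) (j (n+1)) : ℝ) * β 1 ≤ K :=
      le_trans (mul_le_mul_of_nonneg_left h1 (Nat.cast_nonneg _)) (hsingle (n+1))
    have h3 : (r (n+1) (j (n+1)) : ℝ) ≤ K / β 1 := by
      rw [le_div_iff₀ hβ1]; exact h2
    exact Nat.le_floor h3
  obtain ⟨mv, φ, hφ, hφm⟩ :=
    exists_const_subseq (g := fun n => r (n+1) (j (n+1))) hρbound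
  have hmv : 0 < mv := hφm 0 ▸ hr (φ 0 + 1) (j (φ 0 + 1))
  have hmv' : (0:ℝ) < mv := by exact_mod_cast hmv
  set z : ℕ → ℝ := fun k => K - (mv : ℝ) * β (φ k + 1) with hz
  have hzanti : StrictAnti z := by
    intro k l hkl
    have hb : β (φ k + 1) < β (φ l + 1) := by
      apply hβstrict
      have := hφ hkl
      omega
    simp only [hz]
    nlinarith
  have hzmem : ∀ k, z k ∈ combos V := by
    intro k
    refine ⟨∑ j' ∈ Finset.univ.erase (j (φ k + 1)),
      Multiset.replicate (r (φ k + 1) j') (ws (φ k + 1) j' t₀), ?_, ?_⟩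
    · intro y hy
      rw [Multiset.mem_sum] at hy
      obtain ⟨j', _, hy⟩ := hy
      rw [Multiset.eq_of_mem_replicate hy]
      exact hmem _ (hwsW (φ k + 1) j')
    · rw [Multiset.sum_sum]
      have hsplit : (∑ j' ∈ Finset.univ.erase (j (φ k + 1)),
          (Multiset.replicate (r (φ k + 1) j') (ws (φ k + 1) j' t₀)).sum)
          = ∑ j' ∈ Finset.univ.erase (j (φ k + 1)),
            (r (φ k + 1) j' : ℝ) * ws (φ k + 1) j' t₀ :=
        Finset.sum_congr rfl fun j' _ => by
          rw [Multiset.sum_replicate, nsmul_eq_mul]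
      rw [hsplit]
      have hsum := Finset.sum_erase_add Finset.univ
        (fun j' => (r (φ k + 1) j' : ℝ) * ws (φ k + 1) j' t₀)
        (Finset.mem_univ (j (φ k + 1)))
      rw [hKrel (φ k + 1)] at hsum
      have hsum' : (∑ j' ∈ Finset.univ.erase (j (φ k + 1)),
          (r (φ k + 1) j' : ℝ) * ws (φ k + 1) j' t₀)
          + (r (φ k + 1) (j (φ k + 1)) : ℝ) * ws (φ k + 1) (j (φ k + 1)) t₀ = K := hsum
      have hm' : (r (φ k + 1) (j (φ k + 1)) : ℝ) = (mv:ℝ) := by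
        exact_mod_cast hφm k
      rw [hβval (φ k + 1), hm'] at hsum'
      simp only [hz]
      linarith
  have hcWF := combos_isWF hV0 hV
  rw [Set.isWF_iff_no_descending_seq] at hcWF
  exact hcWF z hzanti hzmem

end TrivAux

theorem finiteness_of_trivial_relation_summands (a b : ℝ) (hab : a < b)
    (F : Set (ℝ → ℝ))
    (hlin : ∀ f ∈ F, IsLinearFun f)
    (hnonneg : ∀ f ∈ F, ∀ t ∈ Set.Icc a b, 0 ≤ f t)
    (hone : (fun _ => (1 : ℝ)) ∈ F)
    (hDCC : DCC (((fun f : ℝ → ℝ => f a) '' F) ∪ ((fun f : ℝ → ℝ => f b) '' F)))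
    (K : ℝ) :
    (Wset F a b K).Finite := by
  classical
  have hable : a ≤ b := hab.le
  have haI : a ∈ Set.Icc a b := ⟨le_rfl, hable⟩
  have hbI : b ∈ Set.Icc a b := ⟨hable, le_rfl⟩
  set Sa : Set ℝ := (fun f : ℝ → ℝ => f a) '' F with hSadef
  set Sb : Set ℝ := (fun f : ℝ → ℝ => f b) '' F with hSbdef
  have hWFu : (Sa ∪ Sb).IsWF := by
    rw [Set.isWF_iff_no_descending_seq]
    intro f hf hmem
    exact hDCC ⟨f, fun i => hmem i, hf⟩
  have hSaWF : Sa.IsWF := hWFu.mono Set.subset_union_left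
  have hSbWF : Sb.IsWF := hWFu.mono Set.subset_union_right
  have hSa0 : ∀ x ∈ Sa, (0:ℝ) ≤ x := by
    rintro x ⟨gg, hg, rfl⟩; exact hnonneg gg hg a haI
  have hSb0 : ∀ x ∈ Sb, (0:ℝ) ≤ x := by
    rintro x ⟨gg, hg, rfl⟩; exact hnonneg gg hg b hbI
  have hCa0 := TrivAux.combos_nonneg hSa0
  have hCb0 := TrivAux.combos_nonneg hSb0
  have hCaWF := TrivAux.combos_isWF hSa0 hSaWF
  have hCbWF := TrivAux.combos_isWF hSb0 hSbWF
  have hWD : ∀ w ∈ Wset F a b K, w ∈ calD F a b := by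
    rintro w ⟨s, hs, r, ws, hr, hD, hne, hrel, jj, rfl⟩
    exact hD jj
  have hrep : ∀ w ∈ Wset F a b K, ∃ (m : ℕ) (v : ℝ → ℝ), 0 < m ∧
      (∀ t, w t = ((m:ℝ) - 1 + v t) / m) ∧ IsLinearFun v ∧
      (∀ t ∈ Set.Icc a b, 0 ≤ v t) ∧
      v a ∈ TrivAux.combos Sa ∧ v b ∈ TrivAux.combos Sb ∧
      v a ≤ 1 ∧ (v a = 1 → v b ≤ 1) :=
    fun w hw => TrivAux.calD_rep hab hlin hnonneg (hWD w hw)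
  -- finiteness of the values at `a`
  set Va : Set ℝ := {y : ℝ | ∃ m : ℕ, 0 < m ∧ ∃ x ∈ TrivAux.combos Sa,
      y = ((m:ℝ) - 1 + x) / m ∧ (y ≤ 1 ∨ m ≤ 0)} with hVadef
  have hVaWF : Va.IsWF := TrivAux.capped_isWF hCa0 hCaWF 0
  have hVa0 : ∀ y ∈ Va, (0:ℝ) ≤ y := by
    rintro y ⟨m, hm, x, hx, rfl, -⟩
    have hm' : (1:ℝ) ≤ m := by exact_mod_cast hm
    have hx0 := hCa0 x hx
    apply div_nonneg <;> linarith
  have hmema : ∀ w ∈ Wset F a b K, w a ∈ Va := by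
    intro w hw
    obtain ⟨m, v, hm, hwt, hvlin, hvnn, hca, hcb, hva1, himp⟩ := hrep w hw
    have hm' : (0:ℝ) < m := by exact_mod_cast hm
    refine ⟨m, hm, v a, hca, hwt a, Or.inl ?_⟩
    rw [hwt a, div_le_one hm']
    linarith
  have hAfin : ((fun w : ℝ → ℝ => w a) '' Wset F a b K).Finite :=
    TrivAux.core_finite haI hVa0 hVaWF hmema
  -- a uniform bound for the `m`'s of elements with `w a < 1`
  obtain ⟨MB, hMB⟩ : ∃ MB : ℕ, ∀ y ∈ (fun w : ℝ → ℝ => w a) '' Wset F a b K,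
      y < 1 → 1 / (1 - y) ≤ (MB : ℝ) := by
    obtain ⟨MB, hMB⟩ := (hAfin.image (fun y => Nat.ceil (1 / (1 - y)))).bddAbove
    refine ⟨MB, fun y hy hy1 => ?_⟩
    have h1 : Nat.ceil (1/(1-y)) ≤ MB := hMB (Set.mem_image_of_mem _ hy)
    have h2 : (1:ℝ)/(1-y) ≤ (Nat.ceil ((1:ℝ)/(1-y)) : ℝ) := Nat.le_ceil _
    exact h2.trans (by exact_mod_cast h1)
  -- finiteness of the values at `b`
  set Vb : Set ℝ := {y : ℝ | ∃ m : ℕ, 0 < m ∧ ∃ x ∈ TrivAux.combos Sb,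
      y = ((m:ℝ) - 1 + x) / m ∧ (y ≤ 1 ∨ m ≤ MB)} with hVbdef
  have hVbWF : Vb.IsWF := TrivAux.capped_isWF hCb0 hCbWF MB
  have hVb0 : ∀ y ∈ Vb, (0:ℝ) ≤ y := by
    rintro y ⟨m, hm, x, hx, rfl, -⟩
    have hm' : (1:ℝ) ≤ m := by exact_mod_cast hm
    have hx0 := hCb0 x hx
    apply div_nonneg <;> linarith
  have hmemb : ∀ w ∈ Wset F a b K, w b ∈ Vb := by
    intro w hw
    obtain ⟨m, v, hm, hwt, hvlin, hvnn, hca, hcb, hva1, himp⟩ := hrep w hw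
    have hm' : (0:ℝ) < m := by exact_mod_cast hm
    refine ⟨m, hm, v b, hcb, hwt b, ?_⟩
    by_cases h1 : v a = 1
    · left
      rw [hwt b, div_le_one hm']
      have := himp h1
      linarith
    · right
      have hwa : w a < 1 := by
        rw [hwt a, div_lt_one hm']
        have hva1' : v a < 1 := lt_of_le_of_ne hva1 h1
        linarith
      have hwaA : w a ∈ (fun w : ℝ → ℝ => w a) '' Wset F a b K :=
        Set.mem_image_of_mem _ hw
      have hub := hMB _ hwaA hwa
      have hva0 : 0 ≤ v a := hvnn a haI
      have hmul : (m:ℝ) * w a = (m:ℝ) - 1 + v a := by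
        rw [hwt a]; field_simp
      have h2 : (m:ℝ) * (1 - w a) ≤ 1 := by nlinarith
      have h3 : (m:ℝ) ≤ 1/(1 - w a) := by
        rw [le_div_iff₀ (by linarith : (0:ℝ) < 1 - w a)]
        linarith
      have h4 : (m:ℝ) ≤ (MB:ℝ) := h3.trans hub
      exact_mod_cast h4
  have hBfin : ((fun w : ℝ → ℝ => w b) '' Wset F a b K).Finite :=
    TrivAux.core_finite hbI hVb0 hVbWF hmemb
  -- conclude: a linear function is determined by its values at `a` and `b`
  have hlinW : ∀ w ∈ Wset F a b K, IsLinearFun w := by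
    intro w hw
    obtain ⟨m, v, hm, hwt, ⟨p, q, hpq⟩, -⟩ := hrep w hw
    have hm' : (0:ℝ) < m := by exact_mod_cast hm
    refine ⟨p / m, ((m:ℝ) - 1 + q)/m, fun t => ?_⟩
    rw [hwt t, hpq t]
    field_simp
    ring
  have hpairfin : ((fun w : ℝ → ℝ => (w a, w b)) '' Wset F a b K).Finite := by
    apply Set.Finite.subset (hAfin.prod hBfin)
    rintro y ⟨w, hw, rfl⟩
    exact ⟨Set.mem_image_of_mem _ hw, Set.mem_image_of_mem _ hw⟩
  apply Set.Finite.of_finite_image hpairfin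
  rintro w1 hw1 w2 hw2 heq
  simp only [Prod.mk.injEq] at heq
  obtain ⟨ha', hb'⟩ := heq
  obtain ⟨p1, q1, h1⟩ := hlinW w1 hw1
  obtain ⟨p2, q2, h2⟩ := hlinW w2 hw2
  rw [h1 a, h2 a] at ha'
  rw [h1 b, h2 b] at hb'
  have h3 : p1 * (a - b) = p2 * (a - b) := by
    rw [mul_sub, mul_sub]; linarith
  have hp : p1 = p2 := mul_right_cancel₀ (sub_ne_zero_of_ne hab.ne) h3
  have hq : q1 = q2 := by
    rw [hp] at ha'; linarith
  funext t
  rw [h1 t, h2 t, hp, hq]
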